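/- Let R be a commutative integral domain, t,s units of R, c₀ ∈ R, and define a*b = t·a + s·b + c₀ for a,b ∈ R. Then the identity A25, namely x*((x*y)*z) = ((x*x)*y)*z for all x,y,z ∈ R, holds if and only if s = 1 and t² = 1 (with no restriction on c₀). -/
import Mathlib


/-- The affine operation `a * b = t·a + s·b + c₀` on a commutative integral domain. -/
def affOp {R : Type*} [CommRing R] (t s c₀ : R) (a b : R) : R := t * a + s * b + c₀

/-- An affine quasigroup over an integral domain satisfies the identity A25,
`x((xy)z) = ((xx)y)z`, iff `s = 1` and `t² = 1`. -/
theorem affine_A25_iff {R : Type*} [CommRing R] [IsDomain R]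
    (t s c₀ : R) (ht : IsUnit t) (hs : IsUnit s) :
    (∀ x y z : R,
        affOp t s c₀ x (affOp t s c₀ (affOp t s c₀ x y) z) =
          affOp t s c₀ (affOp t s c₀ (affOp t s c₀ x x) y) z) ↔
      (s = 1 ∧ t ^ 2 = 1) := by
  constructor
  · intro h
    have hz := h 0 0 1
    have h0 := h 0 0 0
    simp only [affOp] at hz h0
    have hs1 : s = 1 := by
      have hss : s * s = s * 1 := by linear_combination hz - h0
      exact mul_left_cancel₀ hs.ne_zero hss
    subst hs1
    have hx := h 1 0 0
    simp only [affOp] at hx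
    have ht3 : t * (t ^ 2 - 1) = 0 := by linear_combination h0 - hx
    have := mul_eq_zero.mp ht3
    rcases this with h1 | h2
    · exact absurd h1 ht.ne_zero
    · exact ⟨rfl, by linear_combination h2⟩
  · rintro ⟨rfl, ht2⟩ x y z
    simp only [affOp]
    linear_combination (-(t * x) - c₀) * ht2
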